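/- (Simulation of HT up to a Pauli operator by state transfer with observables Z, Z⊗X, (X-Y)/√2) Let |y_s⟩ = (|0⟩ + (-1)^s·e^{-iπ/4}|1⟩)/√2. Work in ℂ²⊗ℂ² with the data qubit a as the first factor and the ancilla qubit b as the second, the ancilla being prepared in |s₁⟩ by a Z-measurement with outcome s₁. For all s₁, s₂, s₃ ∈ {0,1} and every φ ∈ ℂ²: (|y_{s₃}⟩⟨y_{s₃}| ⊗ I) · ((I⊗I + (-1)^{s₂}·σz⊗σx)/2) · (φ ⊗ |s₁⟩) = (1/2) · |y_{s₃}⟩ ⊗ (σx^{s₁}·σz^{s₂}·σx^{s₃}·H·T·φ). Hence the measurement sequence Z_b, Z_a⊗X_b, ((X-Y)/√2)_a transfers the state HTφ to qubit b up to the Pauli operator σx^{s₁}σz^{s₂}σx^{s₃}, each outcome branch having squared norm ‖φ‖²/4. -/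

import Mathlib

open Matrix Complex
open scoped Real Kronecker

noncomputable section

/-- The Pauli matrix σx. -/
def σx : Matrix (Fin 2) (Fin 2) ℂ := !![0, 1; 1, 0]

/-- The Pauli matrix σy. -/
def σy : Matrix (Fin 2) (Fin 2) ℂ := !![0, -Complex.I; Complex.I, 0]

/-- The Pauli matrix σz. -/
def σz : Matrix (Fin 2) (Fin 2) ℂ := !![1, 0; 0, -1]

/-- The Hadamard gate `H = (1/√2)·!![1,1;1,-1]`. -/
def Hgate : Matrix (Fin 2) (Fin 2) ℂ :=
  ((Real.sqrt 2 : ℂ))⁻¹ • !![1, 1; 1, -1]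

/-- The T gate `T = !![1,0;0,e^{iπ/4}]`. -/
def Tgate : Matrix (Fin 2) (Fin 2) ℂ :=
  !![1, 0; 0, Complex.exp (Complex.I * (π / 4 : ℝ))]

/-- The computational basis vector `|s⟩` of ℂ². -/
def ket (s : Fin 2) : Fin 2 → ℂ := fun i => if i = s then 1 else 0

/-- The eigenvector `|y_s⟩ = (|0⟩ + (-1)^s·e^{-iπ/4}|1⟩)/√2` of the observable
`(σx - σy)/√2`, with eigenvalue `(-1)^s`. -/
def kety (s : Fin 2) : Fin 2 → ℂ := fun i =>
  if i = 0 then ((Real.sqrt 2 : ℂ))⁻¹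
  else ((-1 : ℂ) ^ (s : ℕ)) * Complex.exp (-(Complex.I * (π / 4 : ℝ))) * ((Real.sqrt 2 : ℂ))⁻¹

/-- The rank-one projector `|y_s⟩⟨y_s|`. -/
def projy (s : Fin 2) : Matrix (Fin 2) (Fin 2) ℂ :=
  Matrix.of fun i j => kety s i * (starRingEnd ℂ) (kety s j)

/-- The tensor product of two vectors of ℂ². -/
def tp (φ ψ : Fin 2 → ℂ) : Fin 2 × Fin 2 → ℂ := fun p => φ p.1 * ψ p.2

set_option maxHeartbeats 2000000

lemma sqrt2_sq : ((Real.sqrt 2 : ℂ)) * (Real.sqrt 2 : ℂ) = 2 := by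
  rw [← Complex.ofReal_mul, Real.mul_self_sqrt (by norm_num)]; norm_num

lemma sqrt2_ne : ((Real.sqrt 2 : ℂ)) ≠ 0 := by
  simpa [Complex.ofReal_ne_zero] using (Real.sqrt_pos.2 (by norm_num : (0:ℝ) < 2)).ne'

lemma exp_pi4 : Complex.exp (Complex.I * (π / 4 : ℝ)) = (Real.sqrt 2 : ℂ)⁻¹ * (1 + Complex.I) := by
  rw [mul_comm, Complex.exp_mul_I, ← Complex.ofReal_cos, ← Complex.ofReal_sin,
    Real.cos_pi_div_four, Real.sin_pi_div_four]
  have h2 := sqrt2_sq; push_cast; field_simp; linear_combination (1 + Complex.I) * h2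

lemma exp_neg_pi4 :
    Complex.exp (-(Complex.I * (π / 4 : ℝ))) = (Real.sqrt 2 : ℂ)⁻¹ * (1 - Complex.I) := by
  rw [show -(Complex.I * ((π/4:ℝ):ℂ)) = ((-(π/4):ℝ):ℂ) * Complex.I by push_cast; ring,
    Complex.exp_mul_I, ← Complex.ofReal_cos, ← Complex.ofReal_sin,
    Real.cos_neg, Real.sin_neg, Real.cos_pi_div_four, Real.sin_pi_div_four]
  have h2 := sqrt2_sq; push_cast; field_simp; linear_combination (1 - Complex.I) * h2

lemma sqrt2_inv : ((Real.sqrt 2 : ℂ))⁻¹ = (Real.sqrt 2 : ℂ) / 2 := by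
  have h2 := sqrt2_sq; have hn := sqrt2_ne; field_simp; linear_combination -h2

lemma p2 : ((Real.sqrt 2 : ℂ))^2 = 2 := by rw [sq]; exact sqrt2_sq
lemma p3 : ((Real.sqrt 2 : ℂ))^3 = 2 * (Real.sqrt 2 : ℂ) := by rw [pow_succ, p2]
lemma p4 : ((Real.sqrt 2 : ℂ))^4 = 4 := by rw [pow_succ, p3]; linear_combination 2 * sqrt2_sq
lemma p5 : ((Real.sqrt 2 : ℂ))^5 = 4 * (Real.sqrt 2 : ℂ) := by rw [pow_succ, p4]
lemma p6 : ((Real.sqrt 2 : ℂ))^6 = 8 := by rw [pow_succ, p5]; linear_combination 4 * sqrt2_sq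
lemma p7 : ((Real.sqrt 2 : ℂ))^7 = 8 * (Real.sqrt 2 : ℂ) := by rw [pow_succ, p6]
lemma p8 : ((Real.sqrt 2 : ℂ))^8 = 16 := by rw [pow_succ, p7]; linear_combination 8 * sqrt2_sq

lemma unit_mul {A B : Matrix (Fin 2) (Fin 2) ℂ} (hA : Aᴴ * A = 1) (hB : Bᴴ * B = 1) :
    (A * B)ᴴ * (A * B) = 1 := by
  rw [Matrix.conjTranspose_mul, mul_assoc, ← mul_assoc Aᴴ A B, hA, one_mul, hB]

lemma σx_unit : σxᴴ * σx = 1 := by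
  ext i j; fin_cases i <;> fin_cases j <;>
    simp [σx, Matrix.mul_apply, Fin.sum_univ_two, Matrix.conjTranspose_apply, Matrix.one_apply]

lemma σz_unit : σzᴴ * σz = 1 := by
  ext i j; fin_cases i <;> fin_cases j <;>
    simp [σz, Matrix.mul_apply, Fin.sum_univ_two, Matrix.conjTranspose_apply, Matrix.one_apply]

lemma H_unit : Hgateᴴ * Hgate = 1 := by
  ext i j
  fin_cases i <;> fin_cases j <;>
  · simp [Hgate, Matrix.mul_apply, Fin.sum_univ_two, Matrix.conjTranspose_apply,
      Matrix.one_apply, Complex.conj_ofReal, map_inv₀]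
    try rw [sqrt2_inv]
    try ring_nf
    try simp only [p2, p3, p4]
    try ring

lemma T_unit : Tgateᴴ * Tgate = 1 := by
  ext i j
  fin_cases i <;> fin_cases j <;>
  · simp [Tgate, Matrix.mul_apply, Fin.sum_univ_two, Matrix.conjTranspose_apply,
      Matrix.one_apply, exp_pi4, _root_.map_mul, map_inv₀, Complex.conj_ofReal,
      map_add, _root_.map_one, Complex.conj_I, -Complex.ofReal_div]
    try rw [sqrt2_inv]
    try ring_nf
    try simp only [p2, p3, p4, Complex.I_sq]
    try ring
    try norm_num

lemma pow_unit {A : Matrix (Fin 2) (Fin 2) ℂ} (hA : Aᴴ * A = 1) (s : Fin 2) :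
    (A ^ (s : ℕ))ᴴ * A ^ (s : ℕ) = 1 := by
  fin_cases s <;> simp [pow_one, hA]

lemma U_unit (s₁ s₂ s₃ : Fin 2) :
    (σx ^ (s₁ : ℕ) * σz ^ (s₂ : ℕ) * σx ^ (s₃ : ℕ) * Hgate * Tgate)ᴴ *
      (σx ^ (s₁ : ℕ) * σz ^ (s₂ : ℕ) * σx ^ (s₃ : ℕ) * Hgate * Tgate) = 1 :=
  unit_mul (unit_mul (unit_mul (unit_mul (pow_unit σx_unit s₁) (pow_unit σz_unit s₂))
    (pow_unit σx_unit s₃)) H_unit) T_unit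

lemma unitary_norm {M : Matrix (Fin 2) (Fin 2) ℂ} (h : Mᴴ * M = 1) (φ : Fin 2 → ℂ) :
    ∑ j : Fin 2, ‖M.mulVec φ j‖ ^ 2 = ∑ i : Fin 2, ‖φ i‖ ^ 2 := by
  have key : star (M.mulVec φ) ⬝ᵥ M.mulVec φ = star φ ⬝ᵥ φ := by
    rw [Matrix.star_mulVec, ← Matrix.dotProduct_mulVec, Matrix.mulVec_mulVec, h,
      Matrix.one_mulVec]
  have aux : ∀ v : Fin 2 → ℂ, ∑ i : Fin 2, ‖v i‖ ^ 2 = (star v ⬝ᵥ v).re := by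
    intro v
    simp [dotProduct, Complex.sq_norm, Pi.star_apply,
      Complex.normSq_apply, Complex.mul_re]
    try ring
  rw [aux, aux, key]

lemma kety_normsq (s : Fin 2) (i : Fin 2) : ‖kety s i‖ ^ 2 = 1 / 2 := by
  fin_cases s <;> fin_cases i <;>
  · simp [kety, norm_mul, norm_inv, Complex.norm_exp,
      Complex.norm_real, _root_.abs_of_nonneg (Real.sqrt_nonneg 2)]
    try rw [← Real.sqrt_two_mul_self]
    try simp [Real.sqrt_mul_self]
    try norm_num [Real.sq_sqrt]

/-- Simulation of `HT` up to a Pauli operator by state transfer with observables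
`Z`, `Z⊗X`, `(X-Y)/√2`: applying the projectors for outcomes `s₂` (observable `σz⊗σx`)
and `s₃` (observable `(σx-σy)/√2` on the data qubit `a`) to `φ ⊗ |s₁⟩` yields
`(1/2)·|y_{s₃}⟩ ⊗ (σx^{s₁}·σz^{s₂}·σx^{s₃}·H·T·φ)`; every branch has squared
norm `‖φ‖²/4`. -/
theorem HT_state_transfer (s₁ s₂ s₃ : Fin 2) (φ : Fin 2 → ℂ) :
    ((projy s₃ ⊗ₖ (1 : Matrix (Fin 2) (Fin 2) ℂ)).mulVec
      (((2 : ℂ)⁻¹ • ((1 : Matrix (Fin 2 × Fin 2) (Fin 2 × Fin 2) ℂ)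
          + ((-1 : ℂ) ^ (s₂ : ℕ)) • (σz ⊗ₖ σx))).mulVec
        (tp φ (ket s₁)))
      = (2 : ℂ)⁻¹ •
          tp (kety s₃)
            ((σx ^ (s₁ : ℕ) * σz ^ (s₂ : ℕ) * σx ^ (s₃ : ℕ) * Hgate * Tgate).mulVec φ)) ∧
    (∑ p : Fin 2 × Fin 2,
        ‖((2 : ℂ)⁻¹ •
          tp (kety s₃)
            ((σx ^ (s₁ : ℕ) * σz ^ (s₂ : ℕ) * σx ^ (s₃ : ℕ) * Hgate * Tgate).mulVec φ)) p‖ ^ 2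
      = (∑ i : Fin 2, ‖φ i‖ ^ 2) / 4) := by
  constructor
  · fin_cases s₁ <;> fin_cases s₂ <;> fin_cases s₃ <;>
    · funext p
      obtain ⟨i, j⟩ := p
      fin_cases i <;> fin_cases j <;>
      · simp [projy, kety, ket, tp, σx, σz, Hgate, Tgate, Matrix.mulVec, dotProduct,
          Fintype.sum_prod_type, Fin.sum_univ_two, Matrix.one_apply, Matrix.mul_apply,
          exp_pi4, exp_neg_pi4, _root_.map_mul, map_inv₀, Complex.conj_ofReal, map_sub, map_add,
          _root_.map_one, Complex.conj_I, pow_zero, pow_one, -Complex.ofReal_div]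
        try simp only [sqrt2_inv]
        try ring_nf
        try simp only [p2, p3, p4, p5, p6, p7, p8]
        try ring
  · have hu := unitary_norm (U_unit s₁ s₂ s₃) φ
    simp only [Fin.sum_univ_two] at hu ⊢
    simp only [Fintype.sum_prod_type, Fin.sum_univ_two, Pi.smul_apply, smul_eq_mul,
      tp, norm_mul, mul_pow, kety_normsq]
    have h14 : ‖((2:ℂ)⁻¹)‖ ^ 2 = 1/4 := by
      rw [norm_inv]
      norm_num
    rw [h14]
    linarith [hu]
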